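/- Composing the graph of Δ∧ with the graph of Σ∨ as in the equation (Σ∨ Δ∧): the composite G(Σ∨_{A,A}) ∗ G(d_{A,¬A,A}) ∗ G(Δ∧_{A,A}) equals the identity Brauerian split equivalence 1_{G(A)}, where G(d) is an identity, G(Δ∧_{A,A}) : n ⊢ 3n has transversals {m_s, m_t} for m < n and caps {m_t, (m+n)_t}-type pairs {m_t, n'_t} for n ≤ m, n' < 3n with |m − n'| = n, and G(Σ∨_{A,A}) : 3n ⊢ n has cups {m_s, n'_s} for m, n' < 2n with |m − n'| = n and transversals {m_s, (m−2n)_t} for 2n ≤ m < 3n. -/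

import Mathlib

open Sum

/-- Embed the first split relation's carrier into the three-part disjoint union. -/
def embR {α β γ : Type} : α ⊕ β → α ⊕ (β ⊕ γ)
  | inl a => inl a
  | inr b => inr (inl b)

/-- Embed the second split relation's carrier into the three-part disjoint union. -/
def embP {α β γ : Type} : β ⊕ γ → α ⊕ (β ⊕ γ)
  | inl b => inr (inl b)
  | inr c => inr (inr c)

/-- Embed the composite's carrier into the three-part disjoint union. -/
def embO {α β γ : Type} : α ⊕ γ → α ⊕ (β ⊕ γ)
  | inl a => inl a
  | inr c => inr (inr c)

/-- The union R^{-t} ∪ P^{-s} viewed inside the disjoint union of all three parts. -/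
def unionRel {α β γ : Type} (R : α ⊕ β → α ⊕ β → Prop) (P : β ⊕ γ → β ⊕ γ → Prop)
    (x y : α ⊕ (β ⊕ γ)) : Prop :=
  (∃ u v, embR (γ := γ) u = x ∧ embR (γ := γ) v = y ∧ R u v) ∨
  (∃ u v, embP (α := α) u = x ∧ embP (α := α) v = y ∧ P u v)

/-- The composite P ∗ R = Tr(R^{-t} ∪ P^{-s}) ∩ (X^s ∪ Z^t)². -/
def splitComp {α β γ : Type} (R : α ⊕ β → α ⊕ β → Prop) (P : β ⊕ γ → β ⊕ γ → Prop)
    (x y : α ⊕ γ) : Prop :=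
  Relation.TransGen (unionRel R P) (embO (β := β) x) (embO (β := β) y)

/-- A Brauerian split equivalence: an equivalence relation all of whose classes
are two-element sets (every element has a unique partner distinct from itself). -/
def IsBrauerian {σ : Type} (R : σ → σ → Prop) : Prop :=
  Equivalence R ∧ ∀ u, ∃ v, v ≠ u ∧ R u v ∧ ∀ w, R u w → w = u ∨ w = v

/-- The identity Brauerian split equivalence 1ₙ, with classes {kₛ, kₜ} for k < n. -/
def idBr (n : ℕ) (x y : Fin n ⊕ Fin n) : Prop :=
  Sum.elim Fin.val Fin.val x = Sum.elim Fin.val Fin.val y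

/-- A two-element class {u, v} is a transversal: one source, one target element. -/
def IsTransversal {α β : Type} (u v : α ⊕ β) : Prop :=
  ∃ a b, (u = inl a ∧ v = inr b) ∨ (u = inr b ∧ v = inl a)

/-- A two-element class {u, v} is a cup: both elements on the source side. -/
def IsCup {α β : Type} (u v : α ⊕ β) : Prop :=
  ∃ a a', u = inl a ∧ v = inl a'

/-- A two-element class {u, v} is a cap: both elements on the target side. -/
def IsCap {α β : Type} (u v : α ⊕ β) : Prop :=
  ∃ b b', u = inr b ∧ v = inr b'

/-- The graph G(Δ∧_{A,A}) : n ⊢ 3n (n = G A): transversals {mₛ, mₜ} for m < n,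
caps {mₜ, m'ₜ} for n ≤ m, m' < 3n with |m − m'| = n. -/
def gDelta (n : ℕ) (x y : Fin n ⊕ Fin (3 * n)) : Prop :=
  x = y ∨
  (∃ (m : Fin n) (m' : Fin (3 * n)),
    ((x = inl m ∧ y = inr m') ∨ (x = inr m' ∧ y = inl m)) ∧ (m' : ℕ) = (m : ℕ)) ∨
  (∃ m m' : Fin (3 * n), x = inr m ∧ y = inr m' ∧
    n ≤ (m : ℕ) ∧ n ≤ (m' : ℕ) ∧ ((m : ℕ) = (m' : ℕ) + n ∨ (m' : ℕ) = (m : ℕ) + n))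

/-- The graph G(Σ∨_{A,A}) : 3n ⊢ n: cups {mₛ, m'ₛ} for m, m' < 2n with
|m − m'| = n, transversals {mₛ, (m − 2n)ₜ} for 2n ≤ m < 3n. -/
def gSigma (n : ℕ) (x y : Fin (3 * n) ⊕ Fin n) : Prop :=
  x = y ∨
  (∃ m m' : Fin (3 * n), x = inl m ∧ y = inl m' ∧
    (m : ℕ) < 2 * n ∧ (m' : ℕ) < 2 * n ∧
    ((m : ℕ) = (m' : ℕ) + n ∨ (m' : ℕ) = (m : ℕ) + n)) ∨
  (∃ (m : Fin (3 * n)) (v : Fin n),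
    ((x = inl m ∧ y = inr v) ∨ (x = inr v ∧ y = inl m)) ∧
    2 * n ≤ (m : ℕ) ∧ (m : ℕ) = (v : ℕ) + 2 * n)

section Aux

/-- A generic invariant lemma: a function constant on steps is constant on transitive closure. -/
lemma transGen_label {σ : Type} {r : σ → σ → Prop} (f : σ → ℕ)
    (hf : ∀ u v, r u v → f u = f v) {a b : σ} (h : Relation.TransGen r a b) :
    f a = f b := by
  induction h with
  | single h' => exact hf _ _ h'
  | tail _ h' ih => exact ih.trans (hf _ _ h')

lemma transGen_symm {σ : Type} {r : σ → σ → Prop}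
    (hr : ∀ u v, r u v → r v u) {a b : σ} (h : Relation.TransGen r a b) :
    Relation.TransGen r b a := by
  induction h with
  | single h' => exact Relation.TransGen.single (hr _ _ h')
  | tail _ h' ih => exact Relation.TransGen.head (hr _ _ h') ih

lemma gDelta_symm (n : ℕ) (x y : Sum (Fin n) (Fin (3 * n))) (h : gDelta n x y) :
    gDelta n y x := by
  rcases h with rfl | ⟨m, m', hor, hv⟩ | ⟨m, m', hx, hy, h1, h2, h3⟩
  · exact Or.inl rfl
  · exact Or.inr (Or.inl ⟨m, m', Or.imp And.symm And.symm hor.symm, hv⟩)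
  · exact Or.inr (Or.inr ⟨m', m, hy, hx, h2, h1, h3.symm⟩)

lemma gSigma_symm (n : ℕ) (x y : Sum (Fin (3 * n)) (Fin n)) (h : gSigma n x y) :
    gSigma n y x := by
  rcases h with rfl | ⟨m, m', hx, hy, h1, h2, h3⟩ | ⟨m, v, hor, h1, h2⟩
  · exact Or.inl rfl
  · exact Or.inr (Or.inl ⟨m', m, hy, hx, h2, h1, h3.symm⟩)
  · refine Or.inr (Or.inr ⟨m, v, ?_, h1, h2⟩)
    rcases hor with ⟨hx, hy⟩ | ⟨hx, hy⟩
    · exact Or.inr ⟨hy, hx⟩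
    · exact Or.inl ⟨hy, hx⟩

lemma idBr_symm (n : ℕ) (x y : Sum (Fin n) (Fin n)) (h : idBr n x y) : idBr n y x :=
  h.symm

/-- The class label for gDelta: on Fin (3n), b for b < 2n, b − n otherwise. -/
def labD (n b : ℕ) : ℕ := if b < 2 * n then b else b - n

/-- Label on the carrier of the first composition. -/
def lab1 (n : ℕ) : Sum (Fin n) (Sum (Fin (3 * n)) (Fin (3 * n))) → ℕ
  | Sum.inl m => (m : ℕ)
  | Sum.inr (Sum.inl b) => labD n (b : ℕ)
  | Sum.inr (Sum.inr b) => labD n (b : ℕ)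

/-- Label on Fin n ⊕ Fin (3n). -/
def labDS (n : ℕ) : Sum (Fin n) (Fin (3 * n)) → ℕ
  | Sum.inl m => (m : ℕ)
  | Sum.inr b => labD n (b : ℕ)

lemma gDelta_lab {n : ℕ} {x y : Sum (Fin n) (Fin (3 * n))} (h : gDelta n x y) :
    labDS n x = labDS n y := by
  rcases h with rfl | ⟨m, m', hor, hv⟩ | ⟨m, m', hx, hy, h1, h2, h3⟩
  · rfl
  · have hm := m.isLt
    rcases hor with ⟨rfl, rfl⟩ | ⟨rfl, rfl⟩ <;> simp only [labDS, labD] <;> split_ifs <;> omega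
  · subst hx; subst hy
    have := m.isLt; have := m'.isLt
    simp only [labDS, labD]
    split_ifs <;> omega

lemma gDelta_of_lab {n : ℕ} {x y : Sum (Fin n) (Fin (3 * n))}
    (h : labDS n x = labDS n y) :
    gDelta n x y := by
  have h3 : ∀ b : Fin (3 * n), (b : ℕ) < 3 * n := fun b => b.isLt
  cases x with
  | inl m =>
    cases y with
    | inl m' =>
      exact Or.inl (by simp only [labDS] at h; exact congrArg Sum.inl (Fin.ext h))
    | inr b =>
      have hm := m.isLt; have hb := h3 b
      simp only [labDS, labD] at h
      refine Or.inr (Or.inl ⟨m, b, Or.inl ⟨rfl, rfl⟩, ?_⟩)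
      split_ifs at h <;> omega
  | inr b =>
    cases y with
    | inl m' =>
      have hm := m'.isLt; have hb := h3 b
      simp only [labDS, labD] at h
      refine Or.inr (Or.inl ⟨m', b, Or.inr ⟨rfl, rfl⟩, ?_⟩)
      split_ifs at h <;> omega
    | inr b' =>
      have hb := h3 b; have hb' := h3 b'
      simp only [labDS, labD] at h
      by_cases hbe : (b : ℕ) = (b' : ℕ)
      · exact Or.inl (congrArg Sum.inr (Fin.ext hbe))
      · refine Or.inr (Or.inr ⟨b, b', rfl, rfl, ?_, ?_, ?_⟩) <;> split_ifs at h <;> omega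

/-- Step 1, forward: gDelta is contained in the composite with the identity. -/
lemma step1_of {n : ℕ} {x y : Sum (Fin n) (Fin (3 * n))} (h : gDelta n x y) :
    splitComp (gDelta n) (idBr (3 * n)) x y := by
  rcases h with rfl | ⟨m, m', hor, hv⟩ | ⟨m, m', hx, hy, h1, h2, h3⟩
  · cases x with
    | inl a =>
      exact Relation.TransGen.single
        (Or.inl ⟨Sum.inl a, Sum.inl a, rfl, rfl, Or.inl rfl⟩)
    | inr c =>
      exact Relation.TransGen.single
        (Or.inr ⟨Sum.inr c, Sum.inr c, rfl, rfl, rfl⟩)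
  · rcases hor with ⟨rfl, rfl⟩ | ⟨rfl, rfl⟩
    · refine Relation.TransGen.head
        (Or.inl ⟨Sum.inl m, Sum.inr m', rfl, rfl,
          Or.inr (Or.inl ⟨m, m', Or.inl ⟨rfl, rfl⟩, hv⟩)⟩)
        (Relation.TransGen.single
          (Or.inr ⟨Sum.inl m', Sum.inr m', rfl, rfl, rfl⟩))
    · refine Relation.TransGen.head
        (Or.inr ⟨Sum.inr m', Sum.inl m', rfl, rfl, rfl⟩)
        (Relation.TransGen.single
          (Or.inl ⟨Sum.inr m', Sum.inl m, rfl, rfl,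
            Or.inr (Or.inl ⟨m, m', Or.inr ⟨rfl, rfl⟩, hv⟩)⟩))
  · subst hx; subst hy
    refine Relation.TransGen.head
      (Or.inr ⟨Sum.inr m, Sum.inl m, rfl, rfl, rfl⟩) ?_
    refine Relation.TransGen.head
      (Or.inl ⟨Sum.inr m, Sum.inr m', rfl, rfl,
        Or.inr (Or.inr ⟨m, m', rfl, rfl, h1, h2, h3⟩)⟩) ?_
    exact Relation.TransGen.single
      (Or.inr ⟨Sum.inl m', Sum.inr m', rfl, rfl, rfl⟩)

/-- Step 1, backward: the composite with the identity is contained in gDelta. -/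
lemma step1_to {n : ℕ} {x y : Sum (Fin n) (Fin (3 * n))}
    (h : splitComp (gDelta n) (idBr (3 * n)) x y) : gDelta n x y := by
  have key : lab1 n (embO x) = lab1 n (embO y) := by
    refine transGen_label (lab1 n) ?_ h
    rintro u v (⟨u', v', rfl, rfl, hR⟩ | ⟨u', v', rfl, rfl, hP⟩)
    · have := gDelta_lab hR
      cases u' <;> cases v' <;> simpa [lab1, embR, labDS] using this
    · have : Sum.elim Fin.val Fin.val u' = Sum.elim Fin.val Fin.val v' := hP
      cases u' <;> cases v' <;> simp_all [lab1, embP]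
  apply gDelta_of_lab
  cases x <;> cases y <;> simpa [lab1, embO, labDS] using key

/-- Label on the carrier of the second composition. -/
def lab2 (n : ℕ) : Sum (Fin n) (Sum (Fin (3 * n)) (Fin n)) → ℕ
  | Sum.inl m => (m : ℕ)
  | Sum.inr (Sum.inl b) => (b : ℕ) % n
  | Sum.inr (Sum.inr v) => (v : ℕ)

end Aux

/-- G(Σ∨_{A,A}) ∗ G(d_{A,¬A,A}) ∗ G(Δ∧_{A,A}) = 1_{G A} in Br,
where G(d) is the identity split equivalence on 3n. -/
theorem sigma_delta_identity (n : ℕ) :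
    ∀ x y, splitComp (splitComp (gDelta n) (idBr (3 * n))) (gSigma n) x y ↔
      idBr n x y := by
  intro x y
  constructor
  · -- forward: use the label lab2 as invariant
    intro h
    have key : lab2 n (embO x) = lab2 n (embO y) := by
      refine transGen_label (lab2 n) ?_ h
      rintro u v (⟨u', v', rfl, rfl, hR⟩ | ⟨u', v', rfl, rfl, hP⟩)
      · have hD := step1_to hR
        rcases hD with rfl | ⟨m, m', hor, hv⟩ | ⟨m, m', rfl, rfl, h1, h2, h3⟩
        · rfl
        · have hm := m.isLt
          rcases hor with ⟨rfl, rfl⟩ | ⟨rfl, rfl⟩ <;>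
            simp [lab1, lab2, embR, hv, Nat.mod_eq_of_lt hm]
        · have hb := m.isLt; have hb' := m'.isLt
          simp only [embR, lab2]
          rcases h3 with h3 | h3 <;> rw [h3] <;> simp [Nat.add_mod_right]
      · rcases hP with rfl | ⟨m, m', rfl, rfl, h1, h2, h3⟩ | ⟨m, v, hor, h1, h2⟩
        · rfl
        · simp only [embP, lab2]
          rcases h3 with h3 | h3 <;> rw [h3] <;> simp [Nat.add_mod_right]
        · have hv := v.isLt
          have : (v : ℕ) + 2 * n = (v : ℕ) + 2 * n := rfl
          rcases hor with ⟨rfl, rfl⟩ | ⟨rfl, rfl⟩ <;>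
            simp [embP, lab2, h2, Nat.mod_eq_of_lt hv]
    cases x <;> cases y <;> simpa [lab2, embO, idBr] using key
  · -- backward: construct explicit paths
    intro h
    have symmstep : ∀ u v, unionRel (splitComp (gDelta n) (idBr (3 * n))) (gSigma n) u v →
        unionRel (splitComp (gDelta n) (idBr (3 * n))) (gSigma n) v u := by
      rintro u v (⟨u', v', rfl, rfl, hR⟩ | ⟨u', v', rfl, rfl, hP⟩)
      · exact Or.inl ⟨v', u', rfl, rfl, transGen_symm (fun a b hab => by
          rcases hab with ⟨a', b', ha, hb, h'⟩ | ⟨a', b', ha, hb, h'⟩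
          · exact Or.inl ⟨b', a', hb, ha, gDelta_symm n _ _ h'⟩
          · exact Or.inr ⟨b', a', hb, ha, idBr_symm _ _ _ h'⟩) hR⟩
      · exact Or.inr ⟨v', u', rfl, rfl, gSigma_symm n _ _ hP⟩
    have main : ∀ (m : Fin n) (v : Fin n), (m : ℕ) = (v : ℕ) →
        splitComp (splitComp (gDelta n) (idBr (3 * n))) (gSigma n) (Sum.inl m) (Sum.inr v) := by
      intro m v hmv
      have hm := m.isLt
      have hb0 : (m : ℕ) < 3 * n := by omega
      have hb1 : (m : ℕ) + n < 3 * n := by omega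
      have hb2 : (m : ℕ) + 2 * n < 3 * n := by omega
      set b0 : Fin (3 * n) := ⟨(m : ℕ), hb0⟩ with hb0d
      set b1 : Fin (3 * n) := ⟨(m : ℕ) + n, hb1⟩ with hb1d
      set b2 : Fin (3 * n) := ⟨(m : ℕ) + 2 * n, hb2⟩ with hb2d
      refine Relation.TransGen.head
        (Or.inl ⟨Sum.inl m, Sum.inr b0, rfl, rfl,
          step1_of (Or.inr (Or.inl ⟨m, b0, Or.inl ⟨rfl, rfl⟩, rfl⟩))⟩) ?_
      refine Relation.TransGen.head
        (Or.inr ⟨Sum.inl b0, Sum.inl b1, rfl, rfl,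
          Or.inr (Or.inl ⟨b0, b1, rfl, rfl, by simp only [hb0d, hb1d, hb2d, Fin.val_mk]; omega,
            by simp only [hb0d, hb1d, hb2d, Fin.val_mk]; omega, Or.inr rfl⟩)⟩) ?_
      refine Relation.TransGen.head
        (Or.inl ⟨Sum.inr b1, Sum.inr b2, rfl, rfl,
          step1_of (Or.inr (Or.inr ⟨b1, b2, rfl, rfl, by simp only [hb0d, hb1d, hb2d, Fin.val_mk]; omega,
            by simp only [hb0d, hb1d, hb2d, Fin.val_mk]; omega, Or.inr (by simp only [hb0d, hb1d, hb2d, Fin.val_mk]; omega)⟩))⟩) ?_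
      exact Relation.TransGen.single
        (Or.inr ⟨Sum.inl b2, Sum.inr v, rfl, rfl,
          Or.inr (Or.inr ⟨b2, v, Or.inl ⟨rfl, rfl⟩, by simp only [hb0d, hb1d, hb2d, Fin.val_mk]; omega,
            by simp only [hb0d, hb1d, hb2d, Fin.val_mk]; omega⟩)⟩)
    cases x with
    | inl m =>
      cases y with
      | inl m' =>
        have : m = m' := Fin.ext h
        subst this
        exact Relation.TransGen.single
          (Or.inl ⟨Sum.inl m, Sum.inl m, rfl, rfl, step1_of (Or.inl rfl)⟩)
      | inr v => exact main m v h
    | inr v =>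
      cases y with
      | inl m => exact transGen_symm symmstep (main m v (idBr_symm _ _ _ h))
      | inr v' =>
        have : v = v' := Fin.ext h
        subst this
        exact Relation.TransGen.single
          (Or.inr ⟨Sum.inr v, Sum.inr v, rfl, rfl, Or.inl rfl⟩)
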